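/- Assume the hypotheses guaranteeing the algebraic relation: conditions (i) ∂_k u_1 = u_k' and 4·∂_{k+1}u_1 = u_k''' − 2u_1'u_k − 4u_1u_k'; (ii) ∂_i u_j = ∂_j u_i; (iii) u_k'u_i − u_i'u_k + 2∂_{i+1}u_k − 2∂_{k+1}u_i = 0; and equation (4mu) with real constants μ_1, …, μ_{2g}. Let Ψ : ℝ^g → ℂ be a smooth function, not identically zero, satisfying 𝓛Ψ = E·Ψ and 𝓤_iΨ = α_i·Ψ for all i = 1, …, g, where E ≠ 0 and α_1, …, α_g are complex constants. Then, with ξ = E⁻¹ and α(ξ) = ∑_{i=1}^g α_i ξ^i, one has 4·α(ξ)² = 4ξ⁻¹ + ∑_{i=1}^{2g} μ_i ξ^i. -/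

import Mathlib

open scoped BigOperators

/-- Partial derivative `∂_i` (1-based index) on functions of `t : Fin g → ℝ`;
`∂_i ≡ 0` for `i = 0` or `i > g` (in particular `∂_{g+1} ≡ 0`). -/
noncomputable def pd {g : ℕ} {E : Type*} [NormedAddCommGroup E] [NormedSpace ℝ E]
    (i : ℕ) (f : (Fin g → ℝ) → E) : (Fin g → ℝ) → E :=
  fun t => if h : 1 ≤ i ∧ i ≤ g then
    fderiv ℝ f t (Pi.single (⟨i - 1, by omega⟩ : Fin g) 1) else 0

/-- The Schrödinger operator `𝓛 f = ∂_x² f − u₁·f` on complex-valued functions. -/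
noncomputable def opLC {g : ℕ} (u : ℕ → (Fin g → ℝ) → ℝ)
    (f : (Fin g → ℝ) → ℂ) : (Fin g → ℝ) → ℂ :=
  fun t => pd 1 (pd 1 f) t - u 1 t • f t

/-- `𝓐_k f = ∂_x²∂_k f − (1/2)(u₁·∂_k f + ∂_k(u₁·f)) − (1/4)(u_k·∂_x f + ∂_x(u_k·f))`
on complex-valued functions. -/
noncomputable def opAC {g : ℕ} (u : ℕ → (Fin g → ℝ) → ℝ) (k : ℕ)
    (f : (Fin g → ℝ) → ℂ) : (Fin g → ℝ) → ℂ :=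
  fun t => pd 1 (pd 1 (pd k f)) t
    - (1/2 : ℝ) • (u 1 t • pd k f t + pd k (fun s => u 1 s • f s) t)
    - (1/4 : ℝ) • (u k t • pd 1 f t + pd 1 (fun s => u k s • f s) t)

/-- `𝓤_k f = 𝓐_k f − ∂_{k+1} f` on complex-valued functions. -/
noncomputable def opUC {g : ℕ} (u : ℕ → (Fin g → ℝ) → ℝ) (k : ℕ)
    (f : (Fin g → ℝ) → ℂ) : (Fin g → ℝ) → ℂ :=
  fun t => opAC u k f t - pd (k+1) f t

/-- The generating function `𝐮(ξ) = ∑_{i=1}^g u_i ξ^i`. -/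
noncomputable def bfu {g : ℕ} (u : ℕ → (Fin g → ℝ) → ℝ) (ξ : ℝ) :
    (Fin g → ℝ) → ℝ :=
  fun t => ∑ i ∈ Finset.Icc 1 g, u i t * ξ ^ i

/-- `𝐮'(ξ) = ∑_{i=1}^g u_i' ξ^i` (prime is `∂_x = ∂_1`). -/
noncomputable def bfu1 {g : ℕ} (u : ℕ → (Fin g → ℝ) → ℝ) (ξ : ℝ) :
    (Fin g → ℝ) → ℝ :=
  fun t => ∑ i ∈ Finset.Icc 1 g, pd 1 (u i) t * ξ ^ i

/-- `𝐮''(ξ) = ∑_{i=1}^g u_i'' ξ^i`. -/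
noncomputable def bfu2 {g : ℕ} (u : ℕ → (Fin g → ℝ) → ℝ) (ξ : ℝ) :
    (Fin g → ℝ) → ℝ :=
  fun t => ∑ i ∈ Finset.Icc 1 g, pd 1 (pd 1 (u i)) t * ξ ^ i

/-- `𝐮'''(ξ) = ∑_{i=1}^g u_i''' ξ^i`. -/
noncomputable def bfu3 {g : ℕ} (u : ℕ → (Fin g → ℝ) → ℝ) (ξ : ℝ) :
    (Fin g → ℝ) → ℝ :=
  fun t => ∑ i ∈ Finset.Icc 1 g, pd 1 (pd 1 (pd 1 (u i))) t * ξ ^ i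

section helpers
variable {g : ℕ} {E : Type*} [NormedAddCommGroup E] [NormedSpace ℝ E]

lemma pd_in {i : ℕ} (h1 : 1 ≤ i) (h2 : i ≤ g) (f : (Fin g → ℝ) → E) (t : Fin g → ℝ) :
    pd i f t = fderiv ℝ f t (Pi.single (⟨i - 1, by omega⟩ : Fin g) 1) := by
  unfold pd; rw [dif_pos ⟨h1, h2⟩]

lemma pd_out {i : ℕ} (h : ¬ (1 ≤ i ∧ i ≤ g)) (f : (Fin g → ℝ) → E) :
    pd i f = fun _ => 0 := by
  funext t; unfold pd; rw [dif_neg h]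

lemma pd_zero_fun (i : ℕ) : pd (g := g) i (fun _ => (0:E)) = fun _ => 0 := by
  funext t
  unfold pd
  split
  · simp [fderiv_const]
  · rfl

lemma contDiff_pd (i : ℕ) (f : (Fin g → ℝ) → E) (hf : ContDiff ℝ (⊤:ℕ∞) f) :
    ContDiff ℝ (⊤:ℕ∞) (pd i f) := by
  unfold pd
  by_cases h : 1 ≤ i ∧ i ≤ g
  · simp only [h, dif_pos]
    exact (hf.fderiv_right (by exact_mod_cast le_refl (⊤:ℕ∞))).clm_apply contDiff_const
  · simp only [h, dif_neg, not_false_iff]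
    exact contDiff_const

lemma pd_comm (i j : ℕ) (f : (Fin g → ℝ) → E) (hf : ContDiff ℝ (⊤:ℕ∞) f) (t : Fin g → ℝ) :
    pd i (pd j f) t = pd j (pd i f) t := by
  by_cases hi : 1 ≤ i ∧ i ≤ g
  · by_cases hj : 1 ≤ j ∧ j ≤ g
    · have hd : Differentiable ℝ f := hf.differentiable (by simp)
      have hd2 : Differentiable ℝ (fderiv ℝ f) :=
        (hf.fderiv_right (m := (⊤:ℕ∞)) (by exact_mod_cast le_refl (⊤:ℕ∞))).differentiable
          (by simp)
      have key : ∀ (v w : Fin g → ℝ),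
          fderiv ℝ (fun s => fderiv ℝ f s v) t w
            = fderiv ℝ (fderiv ℝ f) t w v := by
        intro v w
        have h1 : HasFDerivAt (fun s => fderiv ℝ f s v)
            ((ContinuousLinearMap.apply ℝ E v).comp (fderiv ℝ (fderiv ℝ f) t)) t :=
          (ContinuousLinearMap.apply ℝ E v).hasFDerivAt.comp t (hd2 t).hasFDerivAt
        rw [h1.fderiv]
        rfl
      have sym : ∀ v w, fderiv ℝ (fderiv ℝ f) t v w = fderiv ℝ (fderiv ℝ f) t w v := by
        intro v w
        exact second_derivative_symmetric (fun y => (hd y).hasFDerivAt)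
          ((hd2 t).hasFDerivAt) v w
      have hj' : pd j f = fun s => fderiv ℝ f s (Pi.single (⟨j - 1, by omega⟩ : Fin g) 1) :=
        funext fun s => pd_in hj.1 hj.2 f s
      have hi' : pd i f = fun s => fderiv ℝ f s (Pi.single (⟨i - 1, by omega⟩ : Fin g) 1) :=
        funext fun s => pd_in hi.1 hi.2 f s
      rw [pd_in hi.1 hi.2 _ t, pd_in hj.1 hj.2 _ t, hj', hi', key, key, sym]
    · rw [pd_out hj f, pd_zero_fun i, pd_out hj (pd i f)]
  · rw [pd_out hi f, pd_zero_fun j, pd_out hi (pd j f)]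

lemma pd_add (i : ℕ) (f f' : (Fin g → ℝ) → E) (t : Fin g → ℝ)
    (hf : DifferentiableAt ℝ f t) (hf' : DifferentiableAt ℝ f' t) :
    pd i (fun s => f s + f' s) t = pd i f t + pd i f' t := by
  by_cases h : 1 ≤ i ∧ i ≤ g
  · rw [pd_in h.1 h.2, pd_in h.1 h.2, pd_in h.1 h.2, fderiv_fun_add hf hf']; rfl
  · rw [pd_out h, pd_out h, pd_out h]; simp

lemma pd_sub (i : ℕ) (f f' : (Fin g → ℝ) → E) (t : Fin g → ℝ)
    (hf : DifferentiableAt ℝ f t) (hf' : DifferentiableAt ℝ f' t) :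
    pd i (fun s => f s - f' s) t = pd i f t - pd i f' t := by
  by_cases h : 1 ≤ i ∧ i ≤ g
  · rw [pd_in h.1 h.2, pd_in h.1 h.2, pd_in h.1 h.2, fderiv_fun_sub hf hf']; rfl
  · rw [pd_out h, pd_out h, pd_out h]; simp

lemma pd_const_mul (i : ℕ) (c : ℂ) (f : (Fin g → ℝ) → ℂ) (t : Fin g → ℝ)
    (hf : DifferentiableAt ℝ f t) :
    pd i (fun s => c * f s) t = c * pd i f t := by
  by_cases h : 1 ≤ i ∧ i ≤ g
  · rw [pd_in h.1 h.2, pd_in h.1 h.2, fderiv_const_mul hf c]; rfl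
  · rw [pd_out h, pd_out h]; simp

lemma pd_mul (i : ℕ) (f f' : (Fin g → ℝ) → ℂ) (t : Fin g → ℝ)
    (hf : DifferentiableAt ℝ f t) (hf' : DifferentiableAt ℝ f' t) :
    pd i (fun s => f s * f' s) t = pd i f t * f' t + f t * pd i f' t := by
  by_cases h : 1 ≤ i ∧ i ≤ g
  · rw [pd_in h.1 h.2, pd_in h.1 h.2, pd_in h.1 h.2,
      fderiv_fun_mul hf hf']
    simp [smul_eq_mul]; ring
  · rw [pd_out h, pd_out h, pd_out h]; simp

lemma pd_ofReal (i : ℕ) (c : (Fin g → ℝ) → ℝ) (t : Fin g → ℝ)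
    (hc : DifferentiableAt ℝ c t) :
    pd i (fun s => ((c s : ℝ) : ℂ)) t = ((pd i c t : ℝ) : ℂ) := by
  by_cases h : 1 ≤ i ∧ i ≤ g
  · have h1 : HasFDerivAt (fun s => ((c s : ℝ) : ℂ))
        (Complex.ofRealCLM.comp (fderiv ℝ c t)) t :=
      Complex.ofRealCLM.hasFDerivAt.comp t hc.hasFDerivAt
    rw [pd_in h.1 h.2, pd_in h.1 h.2, h1.fderiv]
    rfl
  · rw [pd_out h, pd_out h]; simp

lemma pd_smul' (i : ℕ) (c : (Fin g → ℝ) → ℝ) (f : (Fin g → ℝ) → ℂ) (t : Fin g → ℝ)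
    (hc : DifferentiableAt ℝ c t) (hf : DifferentiableAt ℝ f t) :
    pd i (fun s => c s • f s) t = ((pd i c t : ℝ) : ℂ) * f t + ((c t : ℝ) : ℂ) * pd i f t := by
  by_cases h : 1 ≤ i ∧ i ≤ g
  · rw [pd_in h.1 h.2, pd_in h.1 h.2, pd_in h.1 h.2,
      fderiv_fun_smul hc hf]
    simp [Complex.real_smul]; ring
  · rw [pd_out h, pd_out h, pd_out h]; simp

end helpers

/-- Under conditions (i), (ii), (iii) and equation (4mu) with real
constants `μ_1, …, μ_{2g}`: if `Ψ` is a smooth common eigenfunction, not identically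
zero, with `𝓛Ψ = E·Ψ` (`E ≠ 0`) and `𝓤_iΨ = α_i·Ψ` for `i = 1, …, g`, then with
`ξ = E⁻¹` and `α(ξ) = ∑ α_i ξ^i` one has `4·α(ξ)² = 4ξ⁻¹ + ∑_{i=1}^{2g} μ_i ξ^i`. -/
theorem statement7 (g : ℕ) (hg : 1 ≤ g) (u : ℕ → (Fin g → ℝ) → ℝ)
    (hu : ∀ i, ContDiff ℝ (⊤ : ℕ∞) (u i))
    (hcond1 : ∀ k, 1 ≤ k → k ≤ g → ∀ t, pd k (u 1) t = pd 1 (u k) t)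
    (hcond2 : ∀ k, 1 ≤ k → k ≤ g → ∀ t,
      4 * pd (k+1) (u 1) t
        = pd 1 (pd 1 (pd 1 (u k))) t - 2 * pd 1 (u 1) t * u k t - 4 * u 1 t * pd 1 (u k) t)
    (hcond3 : ∀ i, 1 ≤ i → i ≤ g → ∀ j, 1 ≤ j → j ≤ g → ∀ t, pd i (u j) t = pd j (u i) t)
    (hcond4 : ∀ i, 1 ≤ i → i ≤ g → ∀ k, 1 ≤ k → k ≤ g → ∀ t,
      pd 1 (u k) t * u i t - pd 1 (u i) t * u k t
        + 2 * pd (i+1) (u k) t - 2 * pd (k+1) (u i) t = 0)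
    (μ : ℕ → ℝ)
    (h4mu : ∀ t, ∀ ξ : ℝ, ξ ≠ 0 →
      bfu1 u ξ t ^ 2 + 2 * bfu2 u ξ t * (2 - bfu u ξ t)
        + 4 * (ξ⁻¹ + u 1 t) * (2 - bfu u ξ t) ^ 2
      = 16 * ξ⁻¹ + 4 * ∑ i ∈ Finset.Icc 1 (2*g), μ i * ξ ^ i)
    (Ψ : (Fin g → ℝ) → ℂ) (hΨ : ContDiff ℝ (⊤ : ℕ∞) Ψ)
    (hΨne : ∃ t, Ψ t ≠ 0)
    (E : ℂ) (hE : E ≠ 0) (α : ℕ → ℂ)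
    (hL : ∀ t, opLC u Ψ t = E * Ψ t)
    (hU : ∀ i, 1 ≤ i → i ≤ g → ∀ t, opUC u i Ψ t = α i * Ψ t) :
    ∀ ξ : ℂ, ξ = E⁻¹ →
      4 * (∑ i ∈ Finset.Icc 1 g, α i * ξ ^ i) ^ 2
        = 4 * ξ⁻¹ + ∑ i ∈ Finset.Icc 1 (2*g), (μ i : ℂ) * ξ ^ i := by
  intro ξ hξ
  have hξ0 : ξ ≠ 0 := by rw [hξ]; exact inv_ne_zero hE
  have hEξ : ξ * E = 1 := by rw [hξ]; field_simp
  obtain ⟨t₀, ht₀⟩ := hΨne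
  -- differentiability helpers
  have dA : ∀ (f : (Fin g → ℝ) → ℂ), ContDiff ℝ (⊤:ℕ∞) f → ∀ t, DifferentiableAt ℝ f t :=
    fun f hf t => hf.differentiable (by simp) t
  have dAR : ∀ (f : (Fin g → ℝ) → ℝ), ContDiff ℝ (⊤:ℕ∞) f → ∀ t, DifferentiableAt ℝ f t :=
    fun f hf t => hf.differentiable (by simp) t
  have sΨ1 : ∀ i, ContDiff ℝ (⊤:ℕ∞) (pd i Ψ) := fun i => contDiff_pd i Ψ hΨ
  have sU : ∀ k, ContDiff ℝ (⊤:ℕ∞) (fun s => ((u k s : ℝ) : ℂ)) :=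
    fun k => Complex.ofRealCLM.contDiff.comp (hu k)
  have su1 : ∀ k, ContDiff ℝ (⊤:ℕ∞) (pd 1 (u k)) := fun k => contDiff_pd 1 (u k) (hu k)
  have sV : ∀ k, ContDiff ℝ (⊤:ℕ∞) (fun s => ((pd 1 (u k) s : ℝ) : ℂ)) :=
    fun k => Complex.ofRealCLM.contDiff.comp (su1 k)
  -- the second-order equation everywhere
  have hLL : pd 1 (pd 1 Ψ) = fun s => E * Ψ s + ((u 1 s : ℝ) : ℂ) * Ψ s := by
    funext s
    have h := hL s
    unfold opLC at h
    rw [Complex.real_smul] at h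
    linear_combination h
  -- Step A : first-order relations everywhere
  have hI : ∀ k, 1 ≤ k → k ≤ g → ∀ t,
      E * pd k Ψ t - (1/2 : ℂ) * (((u k t : ℝ) : ℂ) * pd 1 Ψ t)
        + (1/4 : ℂ) * (((pd 1 (u k) t : ℝ) : ℂ) * Ψ t) - pd (k+1) Ψ t = α k * Ψ t := by
    intro k hk1 hk2 t
    have h := hU k hk1 hk2 t
    unfold opUC opAC at h
    have e2 : pd k (fun s => u 1 s • Ψ s) t
        = ((pd k (u 1) t : ℝ) : ℂ) * Ψ t + ((u 1 t : ℝ) : ℂ) * pd k Ψ t :=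
      pd_smul' k (u 1) Ψ t (dAR _ (hu 1) t) (dA _ hΨ t)
    have e3 : pd 1 (fun s => u k s • Ψ s) t
        = ((pd 1 (u k) t : ℝ) : ℂ) * Ψ t + ((u k t : ℝ) : ℂ) * pd 1 Ψ t :=
      pd_smul' 1 (u k) Ψ t (dAR _ (hu k) t) (dA _ hΨ t)
    have e4 : pd 1 (pd 1 (pd k Ψ)) t
        = E * pd k Ψ t + ((pd k (u 1) t : ℝ) : ℂ) * Ψ t + ((u 1 t : ℝ) : ℂ) * pd k Ψ t := by
      have c1 : pd 1 (pd k Ψ) = pd k (pd 1 Ψ) := funext fun s => pd_comm 1 k Ψ hΨ s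
      rw [c1, pd_comm 1 k (pd 1 Ψ) (sΨ1 1) t, hLL]
      rw [pd_add k _ _ t ((dA _ hΨ t).const_mul E) ((dA _ (sU 1) t).fun_mul (dA _ hΨ t)),
        pd_const_mul k E Ψ t (dA _ hΨ t),
        pd_mul k _ _ t (dA _ (sU 1) t) (dA _ hΨ t),
        pd_ofReal k (u 1) t (dAR _ (hu 1) t)]
      ring
    rw [e2, e3, e4] at h
    have c1 : ((pd k (u 1) t : ℝ) : ℂ) = ((pd 1 (u k) t : ℝ) : ℂ) := by
      exact_mod_cast congrArg Complex.ofReal (hcond1 k hk1 hk2 t)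
    simp only [Complex.real_smul] at h
    push_cast at h
    linear_combination h - (1/2 : ℂ) * Ψ t * c1
  -- Step C : differentiate hI in x, at t₀
  have hII : ∀ k, 1 ≤ k → k ≤ g →
      E * pd k (pd 1 Ψ) t₀
        - ((1/2 : ℂ) * (((pd 1 (u k) t₀ : ℝ) : ℂ) * pd 1 Ψ t₀
            + ((u k t₀ : ℝ) : ℂ) * pd 1 (pd 1 Ψ) t₀))
        + ((1/4 : ℂ) * (((pd 1 (pd 1 (u k)) t₀ : ℝ) : ℂ) * Ψ t₀
            + ((pd 1 (u k) t₀ : ℝ) : ℂ) * pd 1 Ψ t₀))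
        - pd (k+1) (pd 1 Ψ) t₀ = α k * pd 1 Ψ t₀ := by
    intro k hk1 hk2
    have hIf : (fun t => E * pd k Ψ t - (1/2 : ℂ) * (((u k t : ℝ) : ℂ) * pd 1 Ψ t)
        + (1/4 : ℂ) * (((pd 1 (u k) t : ℝ) : ℂ) * Ψ t) - pd (k+1) Ψ t)
        = fun t => α k * Ψ t := funext fun t => hI k hk1 hk2 t
    have hd := congrFun (congrArg (pd (g := g) 1) hIf) t₀
    have dX1 : DifferentiableAt ℝ (fun s => E * pd k Ψ s) t₀ := (dA _ (sΨ1 k) t₀).const_mul E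
    have dm2 : DifferentiableAt ℝ (fun s => ((u k s : ℝ) : ℂ) * pd 1 Ψ s) t₀ :=
      (dA _ (sU k) t₀).mul (dA _ (sΨ1 1) t₀)
    have dX2 : DifferentiableAt ℝ (fun s => (1/2 : ℂ) * (((u k s : ℝ) : ℂ) * pd 1 Ψ s)) t₀ :=
      dm2.const_mul _
    have dm3 : DifferentiableAt ℝ (fun s => ((pd 1 (u k) s : ℝ) : ℂ) * Ψ s) t₀ :=
      (dA _ (sV k) t₀).mul (dA _ hΨ t₀)
    have dX3 : DifferentiableAt ℝ (fun s => (1/4 : ℂ) * (((pd 1 (u k) s : ℝ) : ℂ) * Ψ s)) t₀ :=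
      dm3.const_mul _
    have dX4 : DifferentiableAt ℝ (fun s => pd (k+1) Ψ s) t₀ := dA _ (sΨ1 (k+1)) t₀
    rw [pd_sub 1 _ _ t₀ ((dX1.fun_sub dX2).fun_add dX3) dX4,
        pd_add 1 _ _ t₀ (dX1.fun_sub dX2) dX3,
        pd_sub 1 _ _ t₀ dX1 dX2,
        pd_const_mul 1 E _ t₀ (dA _ (sΨ1 k) t₀),
        pd_const_mul 1 ((1/2 : ℂ)) _ t₀ dm2,
        pd_mul 1 _ _ t₀ (dA _ (sU k) t₀) (dA _ (sΨ1 1) t₀),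
        pd_ofReal 1 (u k) t₀ (dAR _ (hu k) t₀),
        pd_const_mul 1 ((1/4 : ℂ)) _ t₀ dm3,
        pd_mul 1 _ _ t₀ (dA _ (sV k) t₀) (dA _ hΨ t₀),
        pd_ofReal 1 (pd 1 (u k)) t₀ (dAR _ (su1 k) t₀),
        pd_const_mul 1 (α k) Ψ t₀ (dA _ hΨ t₀),
        pd_comm 1 k Ψ hΨ t₀,
        pd_comm 1 (k+1) Ψ hΨ t₀] at hd
    linear_combination hd
  -- telescoping sums
  have tel0 : ∀ φ : (Fin g → ℝ) → ℂ, ∀ n : ℕ,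
      ∑ k ∈ Finset.Icc 1 n, (ξ^k * (E * pd k φ t₀) - ξ^k * pd (k+1) φ t₀)
        = pd 1 φ t₀ - ξ^n * pd (n+1) φ t₀ := by
    intro φ n
    induction n with
    | zero => simp
    | succ n ih =>
      rw [Finset.sum_Icc_succ_top (by omega : 1 ≤ n+1), ih]
      have h1 : ξ^(n+1) * E = ξ^n := by rw [pow_succ, mul_assoc, hEξ, mul_one]
      linear_combination (pd (n+1) φ t₀) * h1
  have tel : ∀ φ : (Fin g → ℝ) → ℂ,
      ∑ k ∈ Finset.Icc 1 g, (ξ^k * (E * pd k φ t₀) - ξ^k * pd (k+1) φ t₀) = pd 1 φ t₀ := by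
    intro φ
    rw [tel0 φ g, pd_out (by omega : ¬(1 ≤ g+1 ∧ g+1 ≤ g)) φ]
    simp
  -- summed first-order relation
  have hsum1 : ∑ k ∈ Finset.Icc 1 g, ((ξ^k * (E * pd k Ψ t₀) - ξ^k * pd (k+1) Ψ t₀)
        + (((u k t₀ : ℝ) : ℂ) * ξ^k) * ((-(1/2 : ℂ)) * pd 1 Ψ t₀)
        + (((pd 1 (u k) t₀ : ℝ) : ℂ) * ξ^k) * ((1/4 : ℂ) * Ψ t₀))
      = ∑ k ∈ Finset.Icc 1 g, (α k * ξ^k) * Ψ t₀ := by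
    refine Finset.sum_congr rfl fun k hk => ?_
    obtain ⟨hk1, hk2⟩ := Finset.mem_Icc.mp hk
    linear_combination ξ^k * hI k hk1 hk2 t₀
  rw [Finset.sum_add_distrib, Finset.sum_add_distrib, ← Finset.sum_mul, ← Finset.sum_mul,
    ← Finset.sum_mul, tel Ψ] at hsum1
  -- summed second relation
  have hsum2 : ∑ k ∈ Finset.Icc 1 g, ((ξ^k * (E * pd k (pd 1 Ψ) t₀) - ξ^k * pd (k+1) (pd 1 Ψ) t₀)
        + (((u k t₀ : ℝ) : ℂ) * ξ^k) * ((-(1/2 : ℂ)) * pd 1 (pd 1 Ψ) t₀)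
        + (((pd 1 (u k) t₀ : ℝ) : ℂ) * ξ^k) * ((-(1/4 : ℂ)) * pd 1 Ψ t₀)
        + (((pd 1 (pd 1 (u k)) t₀ : ℝ) : ℂ) * ξ^k) * ((1/4 : ℂ) * Ψ t₀))
      = ∑ k ∈ Finset.Icc 1 g, (α k * ξ^k) * pd 1 Ψ t₀ := by
    refine Finset.sum_congr rfl fun k hk => ?_
    obtain ⟨hk1, hk2⟩ := Finset.mem_Icc.mp hk
    linear_combination ξ^k * hII k hk1 hk2
  rw [Finset.sum_add_distrib, Finset.sum_add_distrib, Finset.sum_add_distrib,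
    ← Finset.sum_mul, ← Finset.sum_mul, ← Finset.sum_mul, ← Finset.sum_mul,
    tel (pd 1 Ψ)] at hsum2
  have E0 : pd 1 (pd 1 Ψ) t₀ = E * Ψ t₀ + ((u 1 t₀ : ℝ) : ℂ) * Ψ t₀ := congrFun hLL t₀
  -- complexified equation (4mu)
  set Pq : Polynomial ℝ :=
    (∑ i ∈ Finset.Icc 1 g, Polynomial.C (pd 1 (u i) t₀) * Polynomial.X ^ i) ^ 2 * Polynomial.X
    + 2 * (∑ i ∈ Finset.Icc 1 g, Polynomial.C (pd 1 (pd 1 (u i)) t₀) * Polynomial.X ^ i)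
        * (2 - ∑ i ∈ Finset.Icc 1 g, Polynomial.C (u i t₀) * Polynomial.X ^ i) * Polynomial.X
    + 4 * (1 + Polynomial.C (u 1 t₀) * Polynomial.X)
        * (2 - ∑ i ∈ Finset.Icc 1 g, Polynomial.C (u i t₀) * Polynomial.X ^ i) ^ 2
    - 16
    - 4 * (∑ i ∈ Finset.Icc 1 (2*g), Polynomial.C (μ i) * Polynomial.X ^ i) * Polynomial.X
    with hPq
  have hsub : {x : ℝ | x ≠ 0} ⊆ {x | Polynomial.IsRoot Pq x} := by
    intro x hx
    have h := h4mu t₀ x hx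
    simp only [bfu, bfu1, bfu2] at h
    have hinv : x⁻¹ * x = 1 := inv_mul_cancel₀ hx
    show Polynomial.IsRoot Pq x
    unfold Polynomial.IsRoot
    rw [hPq]
    simp only [Polynomial.eval_sub, Polynomial.eval_add, Polynomial.eval_mul,
      Polynomial.eval_pow, Polynomial.eval_ofNat, Polynomial.eval_one,
      Polynomial.eval_C, Polynomial.eval_X, Polynomial.eval_finset_sum]
    linear_combination x * h + (4*(2 - ∑ i ∈ Finset.Icc 1 g, u i t₀ * x ^ i)^2 - 16 + 32*(∑ i ∈ Finset.Icc 1 g, u i t₀ * x ^ i) - 8*(∑ i ∈ Finset.Icc 1 g, u i t₀ * x ^ i)^2) * hinv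
  have hinf : ({x : ℝ | x ≠ 0}).Infinite := by
    have h0 : ({(0:ℝ)}ᶜ : Set ℝ).Infinite := (Set.finite_singleton (0:ℝ)).infinite_compl
    have he : {x : ℝ | x ≠ 0} = ({(0:ℝ)}ᶜ : Set ℝ) := by ext x; simp
    rw [he]; exact h0
  have hP0 : Pq = 0 := Polynomial.eq_zero_of_infinite_isRoot _ (hinf.mono hsub)
  have E3 : (∑ i ∈ Finset.Icc 1 g, ((pd 1 (u i) t₀ : ℝ) : ℂ) * ξ ^ i) ^ 2 * ξ
      + 2 * (∑ i ∈ Finset.Icc 1 g, ((pd 1 (pd 1 (u i)) t₀ : ℝ) : ℂ) * ξ ^ i)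
          * (2 - ∑ i ∈ Finset.Icc 1 g, ((u i t₀ : ℝ) : ℂ) * ξ ^ i) * ξ
      + 4 * (1 + ((u 1 t₀ : ℝ) : ℂ) * ξ)
          * (2 - ∑ i ∈ Finset.Icc 1 g, ((u i t₀ : ℝ) : ℂ) * ξ ^ i) ^ 2
      - 16
      - 4 * (∑ i ∈ Finset.Icc 1 (2*g), ((μ i : ℝ) : ℂ) * ξ ^ i) * ξ = 0 := by
    have h := congrArg (fun q : Polynomial ℝ => Polynomial.aeval ξ q) hP0
    simp only [hPq, map_add, map_sub, map_mul, map_pow, map_ofNat, map_one,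
      Polynomial.aeval_C, Polynomial.aeval_X, map_sum, map_zero,
      Complex.coe_algebraMap] at h
    linear_combination h
  -- final algebra
  have key : (4 * (∑ i ∈ Finset.Icc 1 g, α i * ξ ^ i) ^ 2 * ξ - 4
      - ξ * (∑ i ∈ Finset.Icc 1 (2*g), ((μ i : ℝ) : ℂ) * ξ ^ i)) * Ψ t₀ = 0 := by
    linear_combination
      (-4*ξ*((∑ i ∈ Finset.Icc 1 g, α i * ξ ^ i)
        + (∑ i ∈ Finset.Icc 1 g, ((pd 1 (u i) t₀ : ℝ) : ℂ) * ξ ^ i)/4)) * hsum1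
      + (-4*ξ*(1 - (∑ i ∈ Finset.Icc 1 g, ((u i t₀ : ℝ) : ℂ) * ξ ^ i)/2)) * hsum2
      + (4*ξ*(1 - (∑ i ∈ Finset.Icc 1 g, ((u i t₀ : ℝ) : ℂ) * ξ ^ i)/2)^2) * E0
      + ((2 - (∑ i ∈ Finset.Icc 1 g, ((u i t₀ : ℝ) : ℂ) * ξ ^ i))^2 * Ψ t₀) * hEξ
      + (Ψ t₀/4) * E3
  have h5 : 4 * (∑ i ∈ Finset.Icc 1 g, α i * ξ ^ i) ^ 2 * ξ - 4
      - ξ * (∑ i ∈ Finset.Icc 1 (2*g), ((μ i : ℝ) : ℂ) * ξ ^ i) = 0 :=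
    (mul_eq_zero.mp key).resolve_right ht₀
  field_simp
  linear_combination h5
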